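/- Every unate Boolean function h : {0,1}^k → {0,1} can be written as a conjunction h = w_1 ∧ ⋯ ∧ w_r of clauses, where each clause w_i is a disjunction of literals (variables or negations of variables) and the number of clauses satisfies r ≤ C(k, ⌊k/2⌋), the binomial coefficient of k and ⌊k/2⌋. -/

import Mathlib

lemma coordMono_mono {k : ℕ} (g : (Fin k → Bool) → Bool)
    (hg : ∀ i x, g (Function.update x i false) = true → g (Function.update x i true) = true) :
    ∀ n (x y : Fin k → Bool), (Finset.univ.filter fun i => x i ≠ y i).card ≤ n →
      (∀ i, x i = true → y i = true) → g x = true → g y = true := by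
  intro n
  induction n with
  | zero =>
    intro x y hc hxy hx
    have hxyeq : x = y := by
      funext i
      by_contra hne
      have hi : i ∈ Finset.univ.filter fun i => x i ≠ y i := by simp [hne]
      have := Finset.card_pos.mpr ⟨i, hi⟩
      omega
    rwa [← hxyeq]
  | succ n ih =>
    intro x y hc hxy hx
    by_cases hxyeq : x = y
    · rwa [← hxyeq]
    · obtain ⟨i, hi⟩ : ∃ i, x i ≠ y i := by
        by_contra hno
        push_neg at hno
        exact hxyeq (funext hno)
      have hxi : x i = false := by
        cases hxi : x i
        · rfl
        · exact absurd (hxy i hxi) (by rw [← hxi]; exact fun e => hi e.symm)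
      have hyi : y i = true := by
        cases hyi : y i
        · exact absurd (hxi.trans hyi.symm) hi
        · rfl
      set x' := Function.update x i true with hx'def
      have hgx' : g x' = true := by
        apply hg i x
        have : Function.update x i false = x := by rw [← hxi]; exact Function.update_eq_self i x
        rwa [this]
      apply ih x' y _ _ hgx'
      · have hsub : (Finset.univ.filter fun j => x' j ≠ y j) ⊆
            (Finset.univ.filter fun j => x j ≠ y j).erase i := by
          intro j hj
          simp only [Finset.mem_filter, Finset.mem_univ, true_and] at hj
          by_cases hji : j = i
          · subst hji
            exact absurd (by simp [hx'def, hyi]) hj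
          · rw [Finset.mem_erase]
            refine ⟨hji, ?_⟩
            simp only [Finset.mem_filter, Finset.mem_univ, true_and]
            rwa [hx'def, Function.update_of_ne hji] at hj
        have hmem : i ∈ Finset.univ.filter fun j => x j ≠ y j := by simp [hi]
        have := Finset.card_le_card hsub
        rw [Finset.card_erase_of_mem hmem] at this
        omega
      · intro j hj
        by_cases hji : j = i
        · subst hji; exact hyi
        · rw [hx'def, Function.update_of_ne hji] at hj
          exact hxy j hj

lemma exists_max_zero {k : ℕ} (g : (Fin k → Bool) → Bool) :
    ∀ n (x : Fin k → Bool), (Finset.univ.filter fun i => x i = false).card ≤ n →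
      g x = false → ∃ z, g z = false ∧ (∀ i, x i = true → z i = true) ∧
        ∀ i, z i = false → g (Function.update z i true) = true := by
  intro n
  induction n with
  | zero =>
    intro x hc hx
    refine ⟨x, hx, fun i hi => hi, fun i hif => ?_⟩
    have hi : i ∈ Finset.univ.filter fun i => x i = false := by simp [hif]
    have := Finset.card_pos.mpr ⟨i, hi⟩
    omega
  | succ n ih =>
    intro x hc hx
    by_cases hmax : ∀ i, x i = false → g (Function.update x i true) = true
    · exact ⟨x, hx, fun i hi => hi, hmax⟩
    · push_neg at hmax
      obtain ⟨i, hif, hgx'⟩ := hmax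
      replace hgx' : g (Function.update x i true) = false := by simpa using hgx'
      set x' := Function.update x i true with hx'def
      have hcard : (Finset.univ.filter fun j => x' j = false).card ≤ n := by
        have hsub : (Finset.univ.filter fun j => x' j = false) ⊆
            (Finset.univ.filter fun j => x j = false).erase i := by
          intro j hj
          simp only [Finset.mem_filter, Finset.mem_univ, true_and] at hj
          by_cases hji : j = i
          · subst hji; simp [hx'def] at hj
          · rw [Finset.mem_erase]
            refine ⟨hji, ?_⟩
            simp only [Finset.mem_filter, Finset.mem_univ, true_and]
            rwa [hx'def, Function.update_of_ne hji] at hj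
        have hmem : i ∈ Finset.univ.filter fun j => x j = false := by simp [hif]
        have := Finset.card_le_card hsub
        rw [Finset.card_erase_of_mem hmem] at this
        omega
      obtain ⟨z, hz1, hz2, hz3⟩ := ih x' hcard hgx'
      refine ⟨z, hz1, fun j hj => hz2 j ?_, hz3⟩
      by_cases hji : j = i
      · subst hji; simp [hx'def]
      · rwa [hx'def, Function.update_of_ne hji]

def unateClause {k : ℕ} (σ z : Fin k → Bool) : (Fin k → Bool) → Bool := fun x =>
  decide ((∃ j ∈ Finset.univ.filter (fun i => z i = false ∧ σ i = true), x j = true) ∨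
          (∃ j ∈ Finset.univ.filter (fun i => z i = false ∧ σ i = false), x j = false))




/-- A clause: a disjunction of literals, i.e. there are sets `Sp`, `Sn` of indices with
`w x = ⋁_{j∈Sp} x j ∨ ⋁_{j∈Sn} ¬ x j`. -/
def IsClause {k : ℕ} (w : (Fin k → Bool) → Bool) : Prop :=
  ∃ Sp Sn : Finset (Fin k),
    ∀ x, w x = decide ((∃ j ∈ Sp, x j = true) ∨ (∃ j ∈ Sn, x j = false))

/-- A Boolean function is unate if, in each variable, it is monotone nondecreasing or
monotone nonincreasing (with the other variables held fixed). -/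
def Unate {k : ℕ} (h : (Fin k → Bool) → Bool) : Prop :=
  ∀ i : Fin k,
    (∀ x, h (Function.update x i false) = true → h (Function.update x i true) = true) ∨
    (∀ x, h (Function.update x i true) = true → h (Function.update x i false) = true)

/-- Every unate Boolean function in `k` variables can be written as a conjunction
`h = w_1 ∧ ⋯ ∧ w_r` of clauses with `r ≤ C(k, ⌊k/2⌋)` clauses. -/
theorem unate_cnf_card_le {k : ℕ} (h : (Fin k → Bool) → Bool) (hu : Unate h) :
    ∃ (r : ℕ) (w : Fin r → (Fin k → Bool) → Bool),
      r ≤ Nat.choose k (k / 2) ∧ (∀ j, IsClause (w j)) ∧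
      ∀ x, h x = decide (∀ j, w j x = true) := by

  have hσ : ∀ i : Fin k, ∃ b : Bool,
      (b = true → ∀ x, h (Function.update x i false) = true →
        h (Function.update x i true) = true) ∧
      (b = false → ∀ x, h (Function.update x i true) = true →
        h (Function.update x i false) = true) := by
    intro i
    rcases hu i with H | H
    · exact ⟨true, fun _ => H, fun hb => by simp at hb⟩
    · exact ⟨false, fun hb => by simp at hb, fun _ => H⟩
  choose σ hσ1 hσ2 using hσ
  set T : (Fin k → Bool) → (Fin k → Bool) := fun x i => if σ i then x i else !(x i) with hT
  have hTT : ∀ x, T (T x) = x := by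
    intro x; funext i; by_cases hi : σ i = true <;> simp [hT, hi]
  set g : (Fin k → Bool) → Bool := fun x => h (T x) with hgdef
  have hTupdate : ∀ (x : Fin k → Bool) i b, T (Function.update x i b) =
      Function.update (T x) i (if σ i then b else !b) := by
    intro x i b; funext j
    by_cases hji : j = i
    · subst hji; simp [hT]
    · simp [hT, Function.update_of_ne hji]
  have hg : ∀ i x, g (Function.update x i false) = true →
      g (Function.update x i true) = true := by
    intro i x
    simp only [hgdef, hTupdate]
    by_cases hi : σ i = true
    · simp only [hi, if_true]
      exact hσ1 i hi (T x)
    · have hi' : σ i = false := by simpa using hi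
      simp only [hi', Bool.not_false, Bool.not_true, if_false]
      exact hσ2 i hi' (T x)
  have hmono : ∀ x y, (∀ i, x i = true → y i = true) → g x = true → g y = true :=
    fun x y => coordMono_mono g hg _ x y le_rfl
  set Z : Finset (Fin k → Bool) := Finset.univ.filter
    (fun z => g z = false ∧ ∀ i, z i = false → g (Function.update z i true) = true) with hZ
  have hgiff : ∀ x, g x = true ↔ ∀ z ∈ Z, ∃ i, z i = false ∧ x i = true := by
    intro x
    constructor
    · intro hx z hz
      by_contra hno
      push_neg at hno
      have hxz : ∀ i, x i = true → z i = true := by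
        intro i hi
        cases hzi : z i
        · exact absurd hi (hno i hzi)
        · rfl
      have := hmono x z hxz hx
      simp only [hZ, Finset.mem_filter] at hz
      rw [hz.2.1] at this
      exact absurd this (by simp)
    · intro hall
      by_contra hgx
      replace hgx : g x = false := by simpa using hgx
      obtain ⟨z, hz1, hz2, hz3⟩ := exists_max_zero g _ x le_rfl hgx
      have hzZ : z ∈ Z := Finset.mem_filter.mpr ⟨Finset.mem_univ z, hz1, hz3⟩
      obtain ⟨i, hif, hit⟩ := hall z hzZ
      have := hz2 i hit
      rw [hif] at this
      exact absurd this (by simp)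
  have hcard : Z.card ≤ Nat.choose k (k / 2) := by
    have hinj : Set.InjOn (fun z : Fin k → Bool =>
        Finset.univ.filter fun i => z i = true) Z := by
      intro a _ b _ hab
      funext i
      have := Finset.ext_iff.mp hab i
      simp only [Finset.mem_filter, Finset.mem_univ, true_and] at this
      by_cases hai : a i = true
      · rw [hai, this.mp hai]
      · have hbi : ¬ b i = true := fun hb => hai (this.mpr hb)
        rw [Bool.not_eq_true] at hai hbi
        rw [hai, hbi]
    set A : Finset (Finset (Fin k)) :=
      Z.image (fun z => Finset.univ.filter fun i => z i = true) with hA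
    have hAcard : A.card = Z.card := Finset.card_image_of_injOn hinj
    have hanti : IsAntichain (· ⊆ ·) (A : Set (Finset (Fin k))) := by
      intro s hs t ht hst hsub
      simp only [hA, Finset.coe_image, Set.mem_image, Finset.mem_coe] at hs ht
      obtain ⟨z, hzZ, rfl⟩ := hs
      obtain ⟨z', hz'Z, rfl⟩ := ht
      have hle : ∀ i, z i = true → z' i = true := by
        intro i hi
        have := hsub (Finset.mem_filter.mpr ⟨Finset.mem_univ i, hi⟩)
        exact (Finset.mem_filter.mp this).2
      have hne : z ≠ z' := fun e => hst (by rw [e])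
      obtain ⟨i, hi⟩ : ∃ i, z i ≠ z' i := by
        by_contra hno
        push_neg at hno
        exact hne (funext hno)
      have hzi : z i = false := by
        cases hzi : z i
        · rfl
        · exact absurd (hle i hzi) (by rw [← hzi]; exact fun e => hi e.symm)
      have hz'i : z' i = true := by
        cases hz'i : z' i
        · exact absurd (hzi.trans hz'i.symm) hi
        · rfl
      simp only [hZ, Finset.mem_filter] at hzZ hz'Z
      have h1 : g (Function.update z i true) = true := hzZ.2.2 i hzi
      have h2 : g z' = true := by
        apply hmono _ _ _ h1
        intro j hj
        by_cases hji : j = i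
        · subst hji; exact hz'i
        · rw [Function.update_of_ne hji] at hj
          exact hle j hj
      rw [hz'Z.2.1] at h2
      exact absurd h2 (by simp)
    have := IsAntichain.sperner hanti
    rwa [hAcard, Fintype.card_fin] at this
  have hclause : ∀ z x, unateClause σ z x = true ↔ ∃ i, z i = false ∧ T x i = true := by
    intro z x
    simp only [unateClause, decide_eq_true_eq, Finset.mem_filter, Finset.mem_univ, true_and]
    constructor
    · rintro (⟨j, ⟨hjf, hjs⟩, hjx⟩ | ⟨j, ⟨hjf, hjs⟩, hjx⟩)
      · exact ⟨j, hjf, by simp [hT, hjs, hjx]⟩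
      · exact ⟨j, hjf, by simp [hT, hjs, hjx]⟩
    · rintro ⟨i, hif, hiT⟩
      by_cases hi : σ i = true
      · left; exact ⟨i, ⟨hif, hi⟩, by simpa [hT, hi] using hiT⟩
      · have hi' : σ i = false := by simpa using hi
        right
        refine ⟨i, ⟨hif, hi'⟩, ?_⟩
        simpa [hT, hi'] using hiT
  have hhg : ∀ x, h x = g (T x) := fun x => by rw [hgdef]; simp only [hTT]
  refine ⟨Z.card, fun j => unateClause σ ((Z.equivFin.symm j : { x // x ∈ Z }) : Fin k → Bool),
    hcard, fun j => ⟨Finset.univ.filter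
      (fun i => (Z.equivFin.symm j : { x // x ∈ Z }).1 i = false ∧ σ i = true),
      Finset.univ.filter
      (fun i => (Z.equivFin.symm j : { x // x ∈ Z }).1 i = false ∧ σ i = false),
      fun x => by unfold unateClause; rw [decide_eq_decide]⟩, ?_⟩
  intro x
  have key : h x = true ↔ ∀ j : Fin Z.card,
      unateClause σ ((Z.equivFin.symm j : { x // x ∈ Z }) : Fin k → Bool) x = true := by
    rw [hhg x, hgiff (T x)]
    constructor
    · intro hall j
      rw [hclause]
      exact hall _ (Z.equivFin.symm j).2
    · intro hall z hz
      have := hall (Z.equivFin ⟨z, hz⟩)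
      rw [Equiv.symm_apply_apply, hclause] at this
      exact this
  cases hhx : h x with
  | false =>
    symm
    rw [decide_eq_false_iff_not]
    intro hall
    have := key.mpr hall
    rw [hhx] at this
    exact absurd this (by simp)
  | true =>
    symm
    rw [decide_eq_true_eq]
    exact key.mp hhx
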